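/- For positive definite matrices A, B and t ∈ [0,1], one has A^{-1} ♯ (A ♮_t B) = (A^{-1} ♯ B)^t. -/

import Mathlib

open Matrix
open scoped ComplexOrder

noncomputable def mpow {m : Type*} [Fintype m] [DecidableEq m]
    (A : Matrix m m ℂ) (t : ℝ) : Matrix m m ℂ :=
  if h : A.IsHermitian then
    (h.eigenvectorUnitary : Matrix m m ℂ) *
      Matrix.diagonal (fun i => ((h.eigenvalues i ^ t : ℝ) : ℂ)) *
      star (h.eigenvectorUnitary : Matrix m m ℂ)
  else A

/-- t-metric geometric mean `A ♯ₜ B`. -/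
noncomputable def msharp {m : Type*} [Fintype m] [DecidableEq m]
    (A B : Matrix m m ℂ) (t : ℝ) : Matrix m m ℂ :=
  mpow A (1/2) * mpow (mpow A (-(1/2)) * B * mpow A (-(1/2))) t * mpow A (1/2)

/-- t-spectral geometric mean `A ♮ₜ B`. -/
noncomputable def mnat {m : Type*} [Fintype m] [DecidableEq m]
    (A B : Matrix m m ℂ) (t : ℝ) : Matrix m m ℂ :=
  mpow (msharp A⁻¹ B (1/2)) t * A * mpow (msharp A⁻¹ B (1/2)) t

/-- Eigenvalues in non-increasing order (junk value `0` if not Hermitian). -/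
noncomputable def eigsDesc {n : ℕ} (A : Matrix (Fin n) (Fin n) ℂ) : Fin n → ℝ :=
  if h : A.IsHermitian then (fun i => h.eigenvalues (Tuple.sort h.eigenvalues i.rev)) else 0

/-- `x` is log-majorized by `y` (both listed in non-increasing order). -/
def LogMaj {n : ℕ} (x y : Fin n → ℝ) : Prop :=
  (∀ k : ℕ, ∏ i ∈ Finset.univ.filter (fun i : Fin n => (i : ℕ) < k), x i ≤
      ∏ i ∈ Finset.univ.filter (fun i : Fin n => (i : ℕ) < k), y i) ∧
    ∏ i, x i = ∏ i, y i

/-- k-th compound matrix. -/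
noncomputable def compound {n : ℕ} (k : ℕ) (A : Matrix (Fin n) (Fin n) ℂ) :
    Matrix {s : Finset (Fin n) // s.card = k} {s : Finset (Fin n) // s.card = k} ℂ :=
  fun s t => (A.submatrix (fun i => (s.1.orderIsoOfFin s.2 i : Fin n))
    (fun i => (t.1.orderIsoOfFin t.2 i : Fin n))).det


section Aux

variable {m : Type*} [Fintype m] [DecidableEq m]

lemma mpow_herm {A : Matrix m m ℂ} (h : A.IsHermitian) (t : ℝ) :
    mpow A t = (h.eigenvectorUnitary : Matrix m m ℂ) *
      Matrix.diagonal (fun i => ((h.eigenvalues i ^ t : ℝ) : ℂ)) *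
      star (h.eigenvectorUnitary : Matrix m m ℂ) :=
  dif_pos h

lemma posDef_conj' {X : Matrix m m ℂ} (hX : X.PosDef) (C : Matrix m m ℂ)
    (hC : IsUnit C) : (Cᴴ * X * C).PosDef := by
  refine Matrix.PosDef.of_dotProduct_mulVec_pos (Matrix.isHermitian_conjTranspose_mul_mul C hX.1) fun x hx => ?_
  have hCx : C *ᵥ x ≠ 0 := fun h =>
    hx ((Matrix.mulVec_injective_iff_isUnit.mpr hC) (h.trans (Matrix.mulVec_zero C).symm))
  simpa only [star_mulVec, dotProduct_mulVec, vecMul_vecMul] using hX.dotProduct_mulVec_pos hCx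

lemma posDef_conj {X : Matrix m m ℂ} (hX : X.PosDef) (C : Matrix m m ℂ)
    (hC : IsUnit C) : (C * X * Cᴴ).PosDef := by
  simpa only [conjTranspose_conjTranspose] using
    posDef_conj' hX Cᴴ ((Matrix.isUnit_conjTranspose C).mpr hC)

lemma eigenvectorUnitary_isUnit {A : Matrix m m ℂ} (h : A.IsHermitian) :
    IsUnit (h.eigenvectorUnitary : Matrix m m ℂ) := by
  have h1 : (h.eigenvectorUnitary : Matrix m m ℂ) * star (h.eigenvectorUnitary : Matrix m m ℂ)
      = 1 := (Matrix.mem_unitaryGroup_iff).mp (h.eigenvectorUnitary).2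
  rw [Matrix.isUnit_iff_isUnit_det]
  exact IsUnit.of_mul_eq_one _ (by rw [← Matrix.det_mul, h1, Matrix.det_one])

lemma mpow_posDef {A : Matrix m m ℂ} (hA : A.PosDef) (t : ℝ) : (mpow A t).PosDef := by
  rw [mpow_herm hA.1, Matrix.star_eq_conjTranspose]
  exact posDef_conj
    (Matrix.PosDef.diagonal fun i =>
      Complex.zero_lt_real.mpr (Real.rpow_pos_of_pos (hA.eigenvalues_pos i) t))
    _ (eigenvectorUnitary_isUnit hA.1)

lemma mpow_mul_mpow {A : Matrix m m ℂ} (hA : A.PosDef) (r s : ℝ) :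
    mpow A r * mpow A s = mpow A (r + s) := by
  rw [mpow_herm hA.1, mpow_herm hA.1, mpow_herm hA.1]
  have h1 : star (hA.1.eigenvectorUnitary : Matrix m m ℂ) *
      (hA.1.eigenvectorUnitary : Matrix m m ℂ) = 1 :=
    (Matrix.mem_unitaryGroup_iff').mp (hA.1.eigenvectorUnitary).2
  calc (hA.1.eigenvectorUnitary : Matrix m m ℂ) *
        Matrix.diagonal (fun i => ((hA.1.eigenvalues i ^ r : ℝ) : ℂ)) *
        star (hA.1.eigenvectorUnitary : Matrix m m ℂ) *
        ((hA.1.eigenvectorUnitary : Matrix m m ℂ) *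
        Matrix.diagonal (fun i => ((hA.1.eigenvalues i ^ s : ℝ) : ℂ)) *
        star (hA.1.eigenvectorUnitary : Matrix m m ℂ))
      = (hA.1.eigenvectorUnitary : Matrix m m ℂ) *
        (Matrix.diagonal (fun i => ((hA.1.eigenvalues i ^ r : ℝ) : ℂ)) *
        ((star (hA.1.eigenvectorUnitary : Matrix m m ℂ) *
        (hA.1.eigenvectorUnitary : Matrix m m ℂ)) *
        Matrix.diagonal (fun i => ((hA.1.eigenvalues i ^ s : ℝ) : ℂ)))) *
        star (hA.1.eigenvectorUnitary : Matrix m m ℂ) := by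
        simp only [mul_assoc]
    _ = (hA.1.eigenvectorUnitary : Matrix m m ℂ) *
        Matrix.diagonal (fun i => ((hA.1.eigenvalues i ^ (r + s) : ℝ) : ℂ)) *
        star (hA.1.eigenvectorUnitary : Matrix m m ℂ) := by
        rw [h1, one_mul, Matrix.diagonal_mul_diagonal]
        have : (fun i => ((hA.1.eigenvalues i ^ r : ℝ) : ℂ) * ((hA.1.eigenvalues i ^ s : ℝ) : ℂ))
            = fun i => ((hA.1.eigenvalues i ^ (r + s) : ℝ) : ℂ) := by
          funext i
          rw [← Complex.ofReal_mul, ← Real.rpow_add (hA.eigenvalues_pos i)]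
        rw [this]

lemma mpow_zero {A : Matrix m m ℂ} (h : A.IsHermitian) : mpow A 0 = 1 := by
  rw [mpow_herm h]
  simp only [Real.rpow_zero, Complex.ofReal_one, Matrix.diagonal_one, mul_one]
  exact (Matrix.mem_unitaryGroup_iff).mp (h.eigenvectorUnitary).2

lemma mpow_one {A : Matrix m m ℂ} (h : A.IsHermitian) : mpow A 1 = A := by
  rw [mpow_herm h]
  simp only [Real.rpow_one]
  exact h.spectral_theorem.symm

lemma mpow_neg_one {A : Matrix m m ℂ} (hA : A.PosDef) : mpow A (-1) = A⁻¹ := by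
  have h : mpow A 1 * mpow A (-1) = 1 := by
    rw [mpow_mul_mpow hA]
    norm_num [mpow_zero hA.1]
  rw [mpow_one hA.1] at h
  exact (Matrix.inv_eq_right_inv h).symm

lemma mpow_half_of_sq {M N : Matrix m m ℂ} (hM : M.PosDef) (hN : N.PosDef)
    (h : M * M = N) : mpow N (1/2) = M := by
  have h2 : mpow N (1/2) * mpow N (1/2) = N := by
    rw [mpow_mul_mpow hN]
    norm_num [mpow_one hN.1]
  open scoped MatrixOrder in
  exact (CFC.sqrt_unique h2 (mpow_posDef hN (1/2)).posSemidef.nonneg).symm.trans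
    (CFC.sqrt_unique h hM.posSemidef.nonneg)

end Aux

theorem msharp_inv_mnat {n : ℕ} (A B : Matrix (Fin n) (Fin n) ℂ)
    (hA : A.PosDef) (hB : B.PosDef) (t : ℝ) (ht : t ∈ Set.Icc (0:ℝ) 1) :
    msharp A⁻¹ (mnat A B t) (1/2) = mpow (msharp A⁻¹ B (1/2)) t := by
  have hAinv : (A⁻¹).PosDef := hA.inv
  set P := mpow A⁻¹ (1/2) with hPdef
  set Q := mpow A⁻¹ (-(1/2)) with hQdef
  have hP : P.PosDef := mpow_posDef hAinv _
  have hQ : Q.PosDef := mpow_posDef hAinv _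
  have hPQ : P * Q = 1 := by
    rw [hPdef, hQdef, mpow_mul_mpow hAinv]
    norm_num [mpow_zero hAinv.1]
  have hQP : Q * P = 1 := by
    rw [hPdef, hQdef, mpow_mul_mpow hAinv]
    norm_num [mpow_zero hAinv.1]
  have hQQ : Q * Q = A := by
    rw [hQdef, mpow_mul_mpow hAinv]
    norm_num [mpow_neg_one hAinv,
      Matrix.nonsing_inv_nonsing_inv A ((Matrix.isUnit_iff_isUnit_det A).mp hA.isUnit)]
  -- positivity of the geometric mean S
  have hQBQ : (Q * B * Q).PosDef := by
    have := posDef_conj hB Q hQ.isUnit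
    rwa [hQ.1.eq] at this
  have hS : (msharp A⁻¹ B (1/2)).PosDef := by
    rw [msharp, ← hPdef, ← hQdef]
    have := posDef_conj (mpow_posDef hQBQ (1/2)) P hP.isUnit
    rwa [hP.1.eq] at this
  set G := mpow (msharp A⁻¹ B (1/2)) t with hGdef
  have hG : G.PosDef := mpow_posDef hS t
  have hM : (Q * G * Q).PosDef := by
    have := posDef_conj hG Q hQ.isUnit
    rwa [hQ.1.eq] at this
  have key : Q * (G * A * G) * Q = (Q * G * Q) * (Q * G * Q) := by
    rw [← hQQ]; noncomm_ring
  have hMM : ((Q * G * Q) * (Q * G * Q)).PosDef := by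
    have := posDef_conj Matrix.PosDef.one (Q * G * Q) hM.isUnit
    rwa [mul_one, hM.1.eq] at this
  rw [msharp, mnat, ← hPdef, ← hQdef, ← hGdef, key, mpow_half_of_sq hM hMM rfl]
  calc P * (Q * G * Q) * P = (P * Q) * G * (Q * P) := by noncomm_ring
    _ = G := by rw [hPQ, hQP, one_mul, mul_one]
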